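/- Let a ≥ 2 and k ≥ 1 be integers. If n is a positive integer such that n = Σ_{t∈T} ε_t·δ_t·a^t, where T is a set of k nonnegative integers, δ_t ∈ {1, 2, …, a−1} for all t ∈ T, and ε_t ∈ {1, −1} for all t ∈ T, then M_A(n) ≤ k. -/

import Mathlib

/-- The `i`-th digit of `n` in base `a`. -/
def digit (a n i : ℕ) : ℕ := n / a ^ i % a

/-- `blockCount a n` is the number of maximal `a`-adic blocks of nonzero digits in the
base-`a` representation of `n`, counted via the top ends of the blocks. -/
noncomputable def blockCount (a n : ℕ) : ℕ :=
  {i : ℕ | digit a n i ≠ 0 ∧ digit a n (i + 1) = 0}.ncard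

lemma digit_mod (a n m i : ℕ) (ha : 2 ≤ a) (him : i < m) :
    digit a (n % a ^ m) i = digit a n i := by
  have ha0 : 0 < a := by omega
  have hpi : 0 < a ^ i := Nat.pow_pos ha0
  set q := n / a ^ m with hq
  set r := n % a ^ m with hr
  have hn : n = a ^ i * (a ^ (m - i) * q) + r := by
    have : a ^ i * a ^ (m - i) = a ^ m := by
      rw [← pow_add]; congr 1; omega
    rw [← mul_assoc, this]
    exact (Nat.div_add_mod n (a ^ m)).symm
  have hdiv : n / a ^ i = a ^ (m - i) * q + r / a ^ i := by
    rw [hn, Nat.mul_add_div hpi]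
  have : n / a ^ i % a = r / a ^ i % a := by
    rw [hdiv]
    have : a ^ (m - i) * q = a * (a ^ (m - i - 1) * q) := by
      rw [← mul_assoc, ← pow_succ']
      congr 2; omega
    rw [this, Nat.mul_add_mod]
  simpa [digit] using this.symm

/-- The core lemma: any block top forces a nearby element of `T`. -/
lemma key (a : ℕ) (ha : 2 ≤ a)
    (T : Finset ℕ)
    (δ : ℕ → ℕ) (hδ : ∀ t ∈ T, 1 ≤ δ t ∧ δ t ≤ a - 1)
    (ε : ℕ → ℤ) (hε : ∀ t ∈ T, ε t = 1 ∨ ε t = -1)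
    (n : ℕ)
    (hsum : (n : ℤ) = ∑ t ∈ T, ε t * (δ t : ℤ) * (a : ℤ) ^ t)
    (i : ℕ) (hi0 : digit a n i ≠ 0) (hi1 : digit a n (i + 1) = 0) :
    i ∈ T ∨ i + 1 ∈ T := by
  by_contra h
  push_neg at h
  obtain ⟨hiT, hi1T⟩ := h
  have ha0 : 0 < a := by omega
  set N := n % a ^ (i + 2) with hN
  have hNlt : N < a ^ (i + 2) := Nat.mod_lt _ (Nat.pow_pos ha0)
  -- a^i ≤ N
  have hdi : digit a N i ≠ 0 := by rwa [digit_mod a n (i+2) i ha (by omega)]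
  have hNge : a ^ i ≤ N := by
    by_contra hlt
    push_neg at hlt
    apply hdi
    simp [digit, Nat.div_eq_of_lt hlt]
  -- N < a^(i+1)
  have hdi1 : digit a N (i + 1) = 0 := by rwa [digit_mod a n (i+2) (i+1) ha (by omega)]
  have hNlt1 : N < a ^ (i + 1) := by
    have hdivlt : N / a ^ (i + 1) < a := by
      rw [Nat.div_lt_iff_lt_mul (Nat.pow_pos ha0)]
      calc N < a ^ (i + 2) := hNlt
        _ = a * a ^ (i + 1) := by ring
    have : N / a ^ (i + 1) = 0 := by
      have := hdi1
      rwa [digit, Nat.mod_eq_of_lt hdivlt] at this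
    by_contra hge
    push_neg at hge
    have := Nat.div_pos hge (Nat.pow_pos ha0)
    omega
  -- split sum
  set S : ℤ := ∑ t ∈ T.filter (· < i), ε t * (δ t : ℤ) * (a : ℤ) ^ t with hS
  have hsplit : (n : ℤ) = S + ∑ t ∈ T.filter (fun t => ¬ t < i), ε t * (δ t : ℤ) * (a : ℤ) ^ t := by
    rw [hsum, ← Finset.sum_filter_add_sum_filter_not T (· < i)]
  -- divisibility
  have hdvd2 : ((a : ℤ) ^ (i + 2)) ∣ ∑ t ∈ T.filter (fun t => ¬ t < i), ε t * (δ t : ℤ) * (a : ℤ) ^ t := by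
    apply Finset.dvd_sum
    intro t ht
    simp only [Finset.mem_filter] at ht
    obtain ⟨htT, hti⟩ := ht
    have hne1 : t ≠ i := fun h => hiT (h ▸ htT)
    have hne2 : t ≠ i + 1 := fun h => hi1T (h ▸ htT)
    have ht2 : i + 2 ≤ t := by omega
    exact dvd_mul_of_dvd_right (pow_dvd_pow (a : ℤ) ht2) _
  have hdvdN : ((a : ℤ) ^ (i + 2)) ∣ (n : ℤ) - (N : ℤ) := by
    have hnd := Nat.div_add_mod n (a ^ (i + 2))
    refine ⟨(n / a ^ (i + 2) : ℕ), ?_⟩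
    have hc : (a:ℤ) ^ (i + 2) * ((n / a ^ (i + 2) : ℕ) : ℤ) + (N : ℤ) = (n : ℤ) := by
      exact_mod_cast hnd
    linarith
  have hdvd : ((a : ℤ) ^ (i + 2)) ∣ (N : ℤ) - S := by
    have h1 : (N : ℤ) - S = ((n : ℤ) - S) - ((n : ℤ) - (N : ℤ)) := by ring
    rw [h1]
    apply dvd_sub _ hdvdN
    rw [hsplit]; simpa using hdvd2
  -- bound |S|
  have hSbound : |S| ≤ (a : ℤ) ^ i - 1 := by
    calc |S| ≤ ∑ t ∈ T.filter (· < i), |ε t * (δ t : ℤ) * (a : ℤ) ^ t| :=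
          Finset.abs_sum_le_sum_abs _ _
      _ ≤ ∑ t ∈ T.filter (· < i), ((a : ℤ) - 1) * (a : ℤ) ^ t := by
          apply Finset.sum_le_sum
          intro t ht
          simp only [Finset.mem_filter] at ht
          obtain ⟨htT, _⟩ := ht
          have hε' := hε t htT
          have hδ' := hδ t htT
          have hεabs : |ε t| = 1 := by rcases hε' with h | h <;> simp [h]
          have hpos : (0:ℤ) ≤ (a:ℤ) ^ t := by positivity
          rw [abs_mul, abs_mul, hεabs, one_mul, abs_of_nonneg (by positivity : (0:ℤ) ≤ (δ t : ℤ)),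
            abs_of_nonneg hpos]
          apply mul_le_mul_of_nonneg_right _ hpos
          have : (δ t : ℤ) ≤ ((a - 1 : ℕ) : ℤ) := by exact_mod_cast hδ'.2
          have : (δ t : ℤ) ≤ (a : ℤ) - 1 := by
            push_cast [Nat.cast_sub (by omega : 1 ≤ a)] at this
            linarith
          exact this
      _ ≤ ∑ t ∈ Finset.range i, ((a : ℤ) - 1) * (a : ℤ) ^ t := by
          apply Finset.sum_le_sum_of_subset_of_nonneg
          · intro t ht
            simp only [Finset.mem_filter] at ht
            simp [ht.2]
          · intro t _ _
            have h1 : (0:ℤ) ≤ (a:ℤ) - 1 := by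
              have : (1:ℤ) ≤ a := by exact_mod_cast (by omega : 1 ≤ a)
              linarith
            have h2 : (0:ℤ) ≤ (a:ℤ) ^ t := by positivity
            exact mul_nonneg h1 h2
      _ = (a : ℤ) ^ i - 1 := by
          rw [← Finset.mul_sum, mul_comm]
          exact geom_sum_mul (a : ℤ) i
  -- the contradiction
  have hai : (1:ℤ) ≤ (a:ℤ) ^ i := one_le_pow₀ (by exact_mod_cast (by omega : 1 ≤ a))
  have habs := abs_le.mp hSbound
  have hd_pos : 0 < (N : ℤ) - S := by
    have : (a : ℤ) ^ i ≤ (N : ℤ) := by exact_mod_cast hNge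
    linarith [habs.2]
  have hd_lt : (N : ℤ) - S < (a : ℤ) ^ (i + 2) := by
    have h1 : (N : ℤ) < (a : ℤ) ^ (i + 1) := by exact_mod_cast hNlt1
    have h2 : (a : ℤ) ^ (i + 1) = (a:ℤ) * (a:ℤ) ^ i := by ring
    have h3 : (a : ℤ) ^ (i + 2) = (a:ℤ) * (a:ℤ) * (a:ℤ) ^ i := by ring
    have ha2 : (2:ℤ) ≤ (a:ℤ) := by exact_mod_cast ha
    nlinarith [habs.1, hai]
  have := Int.le_of_dvd hd_pos hdvd
  linarith

theorem stmt_7 (a k : ℕ) (ha : 2 ≤ a) (hk : 1 ≤ k)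
    (T : Finset ℕ) (hT : T.card = k)
    (δ : ℕ → ℕ) (hδ : ∀ t ∈ T, 1 ≤ δ t ∧ δ t ≤ a - 1)
    (ε : ℕ → ℤ) (hε : ∀ t ∈ T, ε t = 1 ∨ ε t = -1)
    (n : ℕ) (hn : 0 < n)
    (hsum : (n : ℤ) = ∑ t ∈ T, ε t * (δ t : ℤ) * (a : ℤ) ^ t) :
    blockCount a n ≤ k := by
  set B : Set ℕ := {i : ℕ | digit a n i ≠ 0 ∧ digit a n (i + 1) = 0} with hB
  set φ : ℕ → ℕ := fun i => if i ∈ T then i else i + 1 with hφ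
  have hmem : ∀ i ∈ B, φ i ∈ T := by
    intro i hi
    obtain ⟨h0, h1⟩ := hi
    rcases key a ha T δ hδ ε hε n hsum i h0 h1 with h | h
    · simp [hφ, h]
    · by_cases hi' : i ∈ T <;> simp [hφ, hi', h]
  have hinj : Set.InjOn φ B := by
    intro i hi j hj hij
    obtain ⟨hi0, hi1⟩ := hi
    obtain ⟨hj0, hj1⟩ := hj
    by_cases h1 : i ∈ T <;> by_cases h2 : j ∈ T <;> simp [hφ, h1, h2] at hij <;> try omega
    · -- i = j + 1
      exfalso; apply hi0; rw [hij]; exact hj1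
    · -- i + 1 = j
      exfalso; apply hj0; rw [← hij]; exact hi1
  have himg : φ '' B ⊆ (T : Set ℕ) := by
    rintro x ⟨i, hi, rfl⟩
    exact hmem i hi
  calc blockCount a n = B.ncard := rfl
    _ = (φ '' B).ncard := (Set.ncard_image_of_injOn hinj).symm
    _ ≤ (T : Set ℕ).ncard := Set.ncard_le_ncard himg T.finite_toSet
    _ = T.card := Set.ncard_coe_finset T
    _ = k := hT
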